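/- For n even, the number of distinct values of the sum of squares of scores over all n-tournaments is 2·C(n/2 + 1, 3) + 1. -/

import Mathlib

open Finset

def IsTournament {n : ℕ} (r : Fin n → Fin n → Prop) : Prop :=
  (∀ i, ¬ r i i) ∧ ∀ i j : Fin n, i ≠ j → (r i j ↔ ¬ r j i)

noncomputable def score {n : ℕ} (r : Fin n → Fin n → Prop) (v : Fin n) : ℕ :=
  Nat.card {j : Fin n // r v j}

def Kf : ℕ → ℕ := fun m => ∑ a ∈ Finset.range m, (a^2 + a)

def mnf : ℕ → ℕ := fun m => m*(2*m*(m-1)+1)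

lemma Kf_succ (m : ℕ) : Kf (m+1) = Kf m + (m^2 + m) := Finset.sum_range_succ _ m

lemma Kf3 (m : ℕ) : 3 * Kf (m+1) = m*(m+1)*(m+2) := by
  induction m with
  | zero => simp [Kf]
  | succ w ih => rw [Kf_succ, Nat.mul_add, ih]; ring

lemma two_choose (w : ℕ) : (w+1).choose 2 * 2 = (w+1)*w := by
  induction w with
  | zero => simp
  | succ u ih =>
      rw [show u+1+1 = u+2 by rfl, Nat.choose_succ_succ (u+1) 1, Nat.add_mul, ih]
      simp [Nat.choose_one_right]; ring

lemma six_choose3 (w : ℕ) : (w+2).choose 3 * 6 = (w+2)*(w+1)*w := by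
  induction w with
  | zero => simp
  | succ u ih =>
      rw [show u+1+2 = u+2+1 by rfl, Nat.choose_succ_succ (u+2) 2, Nat.add_mul, ih]
      have h2 : (u+2).choose 2 * 6 = ((u+2)*(u+1))*3 := by
        have h := two_choose (u+1)
        rw [show u+1+1 = u+2 by rfl] at h
        linarith
      rw [h2]; ring

lemma Kf_eq_choose (m : ℕ) : Kf m = 2 * (m+1).choose 3 := by
  induction m with
  | zero => simp [Kf, Nat.choose]
  | succ w ih =>
      rw [Kf_succ, ih, show w+1+1 = w+2 by rfl, Nat.choose_succ_succ (w+1) 2]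
      have h := two_choose w
      have hw : w^2 + w = (w+1)*w := by ring
      linarith

lemma sq_sum_formula (N : ℕ) : 6 * ∑ a ∈ range (N+1), a^2 = N*(N+1)*(2*N+1) := by
  induction N with
  | zero => simp
  | succ w ih => rw [Finset.sum_range_succ, Nat.mul_add, ih]; ring

lemma mid_identity (m : ℕ) : ∑ a ∈ range (2*m), a^2 = mnf m + 2 * Kf m := by
  cases m with
  | zero => simp [Kf, mnf]
  | succ w =>
      have h6 : 6 * ∑ a ∈ range (2*(w+1)), a^2 = (2*w+1)*(2*w+2)*(2*(2*w+1)+1) := by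
        rw [show 2*(w+1) = (2*w+1)+1 by ring]
        exact sq_sum_formula (2*w+1)
      have hK : 3 * Kf (w+1) = w*(w+1)*(w+2) := Kf3 w
      have hmn : mnf (w+1) = (w+1)*(2*(w+1)*w+1) := by simp [mnf]
      have h : 6 * (mnf (w+1) + 2 * Kf (w+1)) = 6 * ∑ a ∈ range (2*(w+1)), a^2 := by
        rw [h6, Nat.mul_add, hmn, show 6 * (2 * Kf (w+1)) = 4 * (3 * Kf (w+1)) by ring, hK]
        ring
      omega

lemma score_eq_card {n : ℕ} (r : Fin n → Fin n → Prop) (v : Fin n)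
    [DecidablePred (r v)] : score r v = (univ.filter (r v)).card := by
  rw [score, Nat.card_eq_fintype_card, Fintype.card_subtype]

lemma score_eq {n : ℕ} (r : Fin n → Fin n → Prop) (v : Fin n)
    [DecidablePred (r v)] :
    score r v = ∑ j : Fin n, if r v j then 1 else 0 := by
  rw [score_eq_card, Finset.card_filter]

lemma sum_score {n : ℕ} (r : Fin n → Fin n → Prop) (h : IsTournament r) :
    2 * ∑ v : Fin n, score r v = n * (n - 1) := by
  classical
  have hsum : ∑ v : Fin n, score r v
      = ∑ v : Fin n, ∑ j : Fin n, if r v j then 1 else 0 :=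
    Finset.sum_congr rfl (fun v _ => score_eq r v)
  have hswap : ∑ v : Fin n, ∑ j : Fin n, (if r v j then (1:ℕ) else 0)
      = ∑ v : Fin n, ∑ j : Fin n, if r j v then 1 else 0 := Finset.sum_comm
  have hkey : ∀ v : Fin n, (∑ j : Fin n, if r v j then (1:ℕ) else 0)
      + (∑ j : Fin n, if r j v then 1 else 0) = n - 1 := by
    intro v
    rw [← Finset.sum_add_distrib]
    have hpt : ∀ j : Fin n, j ∈ univ → ((if r v j then (1:ℕ) else 0)
        + (if r j v then 1 else 0)) = if j = v then 0 else 1 := by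
      intro j _
      by_cases hj : j = v
      · subst hj; simp [h.1 j]
      · have hiff := h.2 v j (fun hv => hj hv.symm)
        by_cases hr : r v j
        · simp [hr, (hiff.mp hr), hj]
        · have hjv : r j v := by
            by_contra hc
            exact hr (hiff.mpr hc)
          simp [hr, hjv, hj]
    rw [Finset.sum_congr rfl hpt]
    rw [← Finset.add_sum_erase _ _ (Finset.mem_univ v)]
    simp only [if_pos rfl, zero_add]
    have hone : ∀ j ∈ univ.erase v, (if j = v then (0:ℕ) else 1) = 1 := by
      intro j hj
      simp [Finset.ne_of_mem_erase hj]
    rw [Finset.sum_congr rfl hone, Finset.sum_const, Finset.card_erase_of_mem (Finset.mem_univ v)]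
    simp
  have h2 : 2 * ∑ v : Fin n, score r v
      = ∑ v : Fin n, ((∑ j : Fin n, if r v j then (1:ℕ) else 0)
        + (∑ j : Fin n, if r j v then 1 else 0)) := by
    rw [Finset.sum_add_distrib, ← hswap, ← hsum, two_mul]
  rw [h2, Finset.sum_congr rfl (fun v _ => hkey v), Finset.sum_const, card_univ,
    Fintype.card_fin, smul_eq_mul]

lemma sq_choose (s : ℕ) : s^2 = 2 * s.choose 2 + s := by
  cases s with
  | zero => simp
  | succ u =>
      have h := two_choose u
      have h2 : (u+1)^2 = (u+1)*u + (u+1) := by ring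
      linarith

lemma sum_choose_le {n : ℕ} (r : Fin n → Fin n → Prop) (h : IsTournament r) :
    ∑ v : Fin n, (score r v).choose 2 ≤ n.choose 3 := by
  classical
  have hA : ∑ v : Fin n, (score r v).choose 2
      = (univ.sigma (fun v : Fin n => (univ.filter (r v)).powersetCard 2)).card := by
    rw [Finset.card_sigma]
    exact Finset.sum_congr rfl (fun v _ => by
      rw [Finset.card_powersetCard, score_eq_card])
  rw [hA]
  have hmain : (univ.sigma (fun v : Fin n => (univ.filter (r v)).powersetCard 2)).card
      ≤ (univ.powersetCard 3 : Finset (Finset (Fin n))).card := by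
    apply Finset.card_le_card_of_injOn (fun p => insert p.1 p.2)
    · rintro ⟨i, q⟩ hp
      rw [Finset.mem_coe, Finset.mem_sigma] at hp
      obtain ⟨hq, hq2⟩ := Finset.mem_powersetCard.mp hp.2
      have hiq : i ∉ q := fun hiq => h.1 i (Finset.mem_filter.mp (hq hiq)).2
      rw [Finset.mem_coe, Finset.mem_powersetCard]
      exact ⟨Finset.subset_univ _, by show Finset.card (insert i q) = 3; rw [Finset.card_insert_of_notMem hiq, hq2]⟩
    · rintro ⟨i, q⟩ hp ⟨i', q'⟩ hp' heq
      simp only [Finset.mem_coe, Finset.mem_sigma] at hp hp'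
      obtain ⟨hq, _⟩ := Finset.mem_powersetCard.mp hp.2
      obtain ⟨hq', _⟩ := Finset.mem_powersetCard.mp hp'.2
      have hiq : i ∉ q := fun hiq => h.1 i (Finset.mem_filter.mp (hq hiq)).2
      have hiq' : i' ∉ q' := fun hx => h.1 i' (Finset.mem_filter.mp (hq' hx)).2
      simp only at heq
      by_cases hii : i = i'
      · subst hii
        have hqq : q = q' := by
          have e1 : q = (insert i q).erase i := (Finset.erase_insert hiq).symm
          have e2 : q' = (insert i q').erase i := (Finset.erase_insert hiq').symm
          rw [e1, heq, ← e2]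
        rw [hqq]
      · exfalso
        have h1 : i' ∈ insert i q := by rw [heq]; exact Finset.mem_insert_self i' q'
        have h2 : i ∈ insert i' q' := by rw [← heq]; exact Finset.mem_insert_self i q
        have hi'q : i' ∈ q := by
          rcases Finset.mem_insert.mp h1 with he | hm
          · exact absurd he.symm hii
          · exact hm
        have hiq'2 : i ∈ q' := by
          rcases Finset.mem_insert.mp h2 with he | hm
          · exact absurd he hii
          · exact hm
        have hr1 : r i i' := (Finset.mem_filter.mp (hq hi'q)).2
        have hr2 : r i' i := (Finset.mem_filter.mp (hq' hiq'2)).2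
        exact ((h.2 i i' hii).mp hr1) hr2
  calc (univ.sigma (fun v : Fin n => (univ.filter (r v)).powersetCard 2)).card
      ≤ (univ.powersetCard 3 : Finset (Finset (Fin n))).card := hmain
    _ = n.choose 3 := by rw [Finset.card_powersetCard, Finset.card_univ, Fintype.card_fin]

lemma sum_score_exact {n m : ℕ} (hm : n = 2*m) (r : Fin n → Fin n → Prop)
    (h : IsTournament r) : ∑ v : Fin n, score r v = m*(2*m-1) := by
  have h2 := sum_score r h
  cases m with
  | zero => subst hm; simp
  | succ w =>
      have hkey : n * (n-1) = 2*((w+1)*(2*(w+1)-1)) := by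
        subst hm
        have : 2*(w+1) - 1 = 2*w+1 := by omega
        rw [this]
        ring
      rw [hkey] at h2
      exact Nat.eq_of_mul_eq_mul_left (by norm_num) h2

lemma upper_bound {n m : ℕ} (hm : n = 2*m) (r : Fin n → Fin n → Prop)
    (h : IsTournament r) :
    ∑ v : Fin n, (score r v)^2 ≤ mnf m + 2 * Kf m := by
  classical
  have hZ : ∑ v : Fin n, (score r v)^2
      = 2 * (∑ v : Fin n, (score r v).choose 2) + ∑ v : Fin n, score r v := by
    rw [Finset.mul_sum, ← Finset.sum_add_distrib]
    exact Finset.sum_congr rfl (fun v _ => sq_choose _)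
  rw [hZ, sum_score_exact hm r h]
  have hA := sum_choose_le r h
  cases m with
  | zero =>
      subst hm
      simp [Kf, mnf]
  | succ w =>
      have h63 : (n.choose 3) * 6 = (2*w+2)*(2*w+1)*(2*w) := by
        rw [hm, show 2*(w+1) = (2*w)+2 by ring]
        exact six_choose3 (2*w)
      have hK : 3 * Kf (w+1) = w*(w+1)*(w+2) := Kf3 w
      have hmn : mnf (w+1) = (w+1)*(2*(w+1)*w+1) := by simp [mnf]
      have hSv : (w+1)*(2*(w+1)-1) = (w+1)*(2*w+1) := by
        have : 2*(w+1)-1 = 2*w+1 := by omega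
        rw [this]
      have hid : mnf (w+1) + 2 * Kf (w+1) = 2*(n.choose 3) + (w+1)*(2*w+1) := by
        rw [hmn]
        nlinarith [h63, hK]
      rw [hid, hSv]
      have hle : 2 * ∑ v : Fin n, (score r v).choose 2 ≤ 2 * (n.choose 3) :=
        Nat.mul_le_mul_left 2 hA
      exact Nat.add_le_add_right hle _

lemma lower_parity {n m : ℕ} (hm : n = 2*m) (r : Fin n → Fin n → Prop)
    (h : IsTournament r) :
    mnf m ≤ ∑ v : Fin n, (score r v)^2 ∧
      (∑ v : Fin n, (score r v)^2 + mnf m) % 2 = 0 := by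
  classical
  cases m with
  | zero => subst hm; simp [mnf]
  | succ w =>
      have hS : ∑ v : Fin n, score r v = (w+1)*(2*w+1) := by
        have h1 := sum_score_exact hm r h
        rwa [show 2*(w+1)-1 = 2*w+1 by omega] at h1
      have hmn : mnf (w+1) = (w+1)*(2*(w+1)*w+1) := by simp [mnf]
      have key : ∀ v ∈ (univ : Finset (Fin n)),
          (1:ℤ) ≤ (2*(score r v : ℤ) - (2*w+1))^2 := by
        intro v _
        have hx : 2*(score r v : ℤ) - (2*w+1) ≠ 0 := by omega
        rcases lt_or_gt_of_ne hx with h' | h' <;> nlinarith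
      have hsum1 : (n:ℤ) ≤ ∑ v : Fin n, (2*(score r v:ℤ) - (2*w+1))^2 := by
        have h0 : (n:ℤ) = ∑ _v : Fin n, (1:ℤ) := by simp
        rw [h0]
        exact Finset.sum_le_sum key
      have hexp : ∑ v : Fin n, (2*(score r v:ℤ) - (2*w+1))^2
          = 4*((∑ v : Fin n, (score r v)^2 : ℕ) : ℤ)
            - 4*(2*w+1)*((∑ v : Fin n, score r v : ℕ) : ℤ) + n*(2*w+1)^2 := by
        have hpt : ∀ v ∈ (univ : Finset (Fin n)),
            (2*(score r v:ℤ) - (2*w+1))^2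
              = 4*(score r v:ℤ)^2 - 4*(2*w+1)*(score r v:ℤ) + (2*w+1)^2 :=
          fun v _ => by ring
        rw [Finset.sum_congr rfl hpt, Finset.sum_add_distrib, Finset.sum_sub_distrib,
          ← Finset.mul_sum, ← Finset.mul_sum, Finset.sum_const, card_univ,
          Fintype.card_fin, nsmul_eq_mul]
        push_cast
        ring
      have hSZ : ((∑ v : Fin n, score r v : ℕ) : ℤ) = ((w:ℤ)+1)*(2*w+1) := by
        rw [hS]; push_cast; ring
      constructor
      · have hgoal : ((mnf (w+1) : ℕ) : ℤ) ≤ ((∑ v : Fin n, (score r v)^2 : ℕ) : ℤ) := by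
          have hn : (n:ℤ) = 2*((w:ℤ)+1) := by rw [hm]; push_cast; ring
          have hmnc : ((mnf (w+1) : ℕ) : ℤ) = ((w:ℤ)+1)*(2*((w:ℤ)+1)*(w:ℤ)+1) := by
            rw [hmn]; push_cast; ring
          rw [hmnc]
          nlinarith [hsum1, hexp, hSZ, hn]
        exact_mod_cast hgoal
      · have e1 : Even ((((∑ v : Fin n, (score r v)^2 : ℕ)) : ℤ)
            - ((∑ v : Fin n, score r v : ℕ) : ℤ)) := by
          have hrw : (((∑ v : Fin n, (score r v)^2 : ℕ)) : ℤ)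
              - ((∑ v : Fin n, score r v : ℕ) : ℤ)
              = ∑ v : Fin n, ((score r v:ℤ)^2 - (score r v:ℤ)) := by
            rw [Finset.sum_sub_distrib]
            push_cast
            ring
          rw [hrw]
          apply Finset.even_sum
          intro v _
          have : (score r v:ℤ)^2 - (score r v:ℤ)
              = ((score r v:ℤ)-1)*(((score r v:ℤ)-1)+1) := by ring
          rw [this]
          exact Int.even_mul_succ_self _
        obtain ⟨d, hd⟩ := e1
        have e2 : ((∑ v : Fin n, score r v : ℕ) : ℤ) + (w+1) = 2*((w+1)*(w+1)) := by
          rw [hSZ]; ring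
        have e3 : ((mnf (w+1) : ℕ) : ℤ) + (w+1) = 2*((w+1)*(w^2+w+1)) := by
          rw [hmn]; push_cast; ring
        omega

def tourR (n k v : ℕ) : Fin n → Fin n → Prop :=
  fun i j => Xor' (j.val < i.val)
    ((i.val = 0 ∧ (j.val = v ∨ n - k ≤ j.val)) ∨ (j.val = 0 ∧ (i.val = v ∨ n - k ≤ i.val)))

lemma tour_tournament {n k v : ℕ} (hv1 : 1 ≤ v) (hv2 : v + k + 1 ≤ n) :
    IsTournament (tourR n k v) := by
  constructor
  · intro i
    simp only [tourR, Xor', Xor]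
    omega
  · intro i j hij
    have hne : i.val ≠ j.val := fun hv => hij (Fin.val_injective hv)
    simp only [tourR, Xor', Xor]
    omega

lemma tour_score {n k v : ℕ} (hv1 : 1 ≤ v) (hv2 : v + k + 1 ≤ n) (x : Fin n) :
    score (tourR n k v) x
      = if x.val = 0 then k+1 else if (x.val = v ∨ n-k ≤ x.val) then x.val - 1 else x.val := by
  classical
  rw [score_eq]
  have hconv : ∑ j : Fin n, (if tourR n k v x j then 1 else 0)
      = ∑ a ∈ range n, (if Xor' (a < x.val)
          ((x.val = 0 ∧ (a = v ∨ n - k ≤ a)) ∨ (a = 0 ∧ (x.val = v ∨ n - k ≤ x.val)))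
          then 1 else 0) := by
    rw [← Fin.sum_univ_eq_sum_range]
    exact Finset.sum_congr rfl (fun j _ => if_congr Iff.rfl rfl rfl)
  rw [hconv]
  by_cases hx0 : x.val = 0
  · rw [if_pos hx0]
    have hpt : ∀ a ∈ range n, (if Xor' (a < x.val)
          ((x.val = 0 ∧ (a = v ∨ n - k ≤ a)) ∨ (a = 0 ∧ (x.val = v ∨ n - k ≤ x.val)))
          then (1:ℕ) else 0) = if (a = v ∨ n - k ≤ a) then 1 else 0 := by
      intro a _
      apply if_congr _ rfl rfl
      simp only [Xor', Xor]
      omega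
    rw [Finset.sum_congr rfl hpt, ← Finset.card_filter]
    have hfil : (range n).filter (fun a => a = v ∨ n - k ≤ a) = insert v (Ico (n-k) n) := by
      ext a
      simp only [Finset.mem_filter, Finset.mem_range, Finset.mem_insert, Finset.mem_Ico]
      omega
    rw [hfil, Finset.card_insert_of_notMem (by simp only [Finset.mem_Ico]; omega),
      Nat.card_Ico]
    omega
  · rw [if_neg hx0]
    by_cases hxin : x.val = v ∨ n - k ≤ x.val
    · rw [if_pos hxin]
      have hpt : ∀ a ∈ range n, (if Xor' (a < x.val)
            ((x.val = 0 ∧ (a = v ∨ n - k ≤ a)) ∨ (a = 0 ∧ (x.val = v ∨ n - k ≤ x.val)))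
            then (1:ℕ) else 0) = if (1 ≤ a ∧ a < x.val) then 1 else 0 := by
        intro a _
        apply if_congr _ rfl rfl
        simp only [Xor', Xor]
        omega
      rw [Finset.sum_congr rfl hpt, ← Finset.card_filter]
      have hfil : (range n).filter (fun a => 1 ≤ a ∧ a < x.val) = Ico 1 x.val := by
        ext a
        simp only [Finset.mem_filter, Finset.mem_range, Finset.mem_Ico]
        have := x.isLt
        omega
      rw [hfil, Nat.card_Ico]
    · rw [if_neg hxin]
      have hpt : ∀ a ∈ range n, (if Xor' (a < x.val)
            ((x.val = 0 ∧ (a = v ∨ n - k ≤ a)) ∨ (a = 0 ∧ (x.val = v ∨ n - k ≤ x.val)))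
            then (1:ℕ) else 0) = if (a < x.val) then 1 else 0 := by
        intro a _
        apply if_congr _ rfl rfl
        simp only [Xor', Xor]
        omega
      rw [Finset.sum_congr rfl hpt, ← Finset.card_filter]
      have hfil : (range n).filter (fun a => a < x.val) = range x.val := by
        ext a
        simp only [Finset.mem_filter, Finset.mem_range]
        have := x.isLt
        omega
      rw [hfil, Finset.card_range]

lemma tour_exists {n m k v : ℕ} (hm : n = 2*m) (hm1 : 1 ≤ m) (hk : k + 1 ≤ m)
    (hv1 : 1 ≤ v) (hv2 : v + k + 1 ≤ n) :
    ∃ r : Fin n → Fin n → Prop, IsTournament r ∧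
      ∑ x : Fin n, (score r x)^2 + 2*(k*(n-2-k) + (v-1)) = mnf m + 2 * Kf m := by
  classical
  refine ⟨tourR n k v, tour_tournament hv1 hv2, ?_⟩
  have hkn : k + 2 ≤ n := by omega
  have hvnk : v < n - k := by omega
  have hnk1 : 1 ≤ n - k := by omega
  have hnkn : n - k ≤ n := by omega
  -- replace scores by explicit function
  have hsum0 : ∑ x : Fin n, (score (tourR n k v) x)^2
      = ∑ a ∈ range n, (if a = 0 then k+1 else if (a = v ∨ n-k ≤ a) then a - 1 else a)^2 := by
    rw [← Fin.sum_univ_eq_sum_range]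
    exact Finset.sum_congr rfl (fun x _ => by rw [tour_score hv1 hv2 x])
  set g : ℕ → ℕ := fun a => (if a = 0 then k+1 else if (a = v ∨ n-k ≤ a) then a - 1 else a)^2
    with hg
  -- split the range
  have hs1 : ∑ a ∈ range n, g a
      = g 0 + (∑ a ∈ Ico 1 (n-k), g a + ∑ a ∈ Ico (n-k) n, g a) := by
    rw [Finset.range_eq_Ico,
      ← Finset.sum_Ico_consecutive g (by omega : (0:ℕ) ≤ n-k) hnkn,
      ← Finset.sum_Ico_consecutive g (by omega : (0:ℕ) ≤ 1) hnk1,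
      Nat.Ico_zero_eq_range, Finset.sum_range_one]
    ring
  have hg0 : g 0 = (k+1)^2 := by simp [hg]
  -- middle piece
  have hp2 : ∑ a ∈ Ico 1 (n-k), g a
      = ∑ a ∈ Ico 1 (n-k), (if a = v then (v-1)^2 else a^2) := by
    refine Finset.sum_congr rfl (fun a ha => ?_)
    rw [Finset.mem_Ico] at ha
    rw [hg]
    simp only
    rw [if_neg (by omega : ¬ a = 0)]
    by_cases hav : a = v
    · rw [if_pos (Or.inl hav), if_pos hav, hav]
    · rw [if_neg (by omega : ¬ (a = v ∨ n - k ≤ a)), if_neg hav]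
  have hvmem : v ∈ Ico 1 (n-k) := by rw [Finset.mem_Ico]; omega
  have hmid1 : ∑ a ∈ Ico 1 (n-k), (if a = v then (v-1)^2 else a^2)
      = (v-1)^2 + ∑ a ∈ (Ico 1 (n-k)).erase v, a^2 := by
    rw [← Finset.add_sum_erase _ _ hvmem, if_pos rfl]
    congr 1
    exact Finset.sum_congr rfl (fun a ha => if_neg (Finset.ne_of_mem_erase ha))
  have hmid2 : ∑ a ∈ Ico 1 (n-k), a^2
      = v^2 + ∑ a ∈ (Ico 1 (n-k)).erase v, a^2 :=
    (Finset.add_sum_erase _ _ hvmem).symm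
  -- top piece
  have hp3 : ∑ a ∈ Ico (n-k) n, g a = ∑ a ∈ Ico (n-k) n, (a-1)^2 := by
    refine Finset.sum_congr rfl (fun a ha => ?_)
    rw [Finset.mem_Ico] at ha
    rw [hg]
    simp only
    rw [if_neg (by omega : ¬ a = 0), if_pos (Or.inr ha.1)]
  -- A1 as a range sum
  have hA1 : ∑ a ∈ Ico 1 (n-k), a^2 = ∑ a ∈ range (n-k), a^2 := by
    rw [Finset.range_eq_Ico, ← Finset.sum_Ico_consecutive _ (by omega : (0:ℕ) ≤ 1) hnk1,
      Nat.Ico_zero_eq_range, Finset.sum_range_one]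
    simp
  -- gauss sums
  have hgauss1 : (∑ a ∈ range n, (a:ℤ)) * 2 = (n:ℤ) * ((n:ℤ) - 1) := by
    have h := Finset.sum_range_id_mul_two n
    calc (∑ a ∈ range n, (a:ℤ)) * 2 = (((∑ a ∈ range n, a) * 2 : ℕ) : ℤ) := by push_cast; ring
      _ = ((n * (n-1) : ℕ) : ℤ) := by rw [h]
      _ = (n:ℤ) * ((n:ℤ) - 1) := by
          rw [Nat.cast_mul, Nat.cast_sub (by omega : 1 ≤ n)]
          norm_num
  have hgauss2 : (∑ a ∈ range (n-k), (a:ℤ)) * 2 = ((n:ℤ) - k) * ((n:ℤ) - k - 1) := by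
    have h := Finset.sum_range_id_mul_two (n-k)
    calc (∑ a ∈ range (n-k), (a:ℤ)) * 2 = (((∑ a ∈ range (n-k), a) * 2 : ℕ) : ℤ) := by
          push_cast; ring
      _ = (((n-k) * ((n-k)-1) : ℕ) : ℤ) := by rw [h]
      _ = ((n:ℤ) - k) * ((n:ℤ) - k - 1) := by
          rw [Nat.cast_mul, Nat.cast_sub (by omega : 1 ≤ n - k), Nat.cast_sub (by omega : k ≤ n)]
          norm_num
  -- erase sum in ℤ
  have hT : (∑ a ∈ (Ico 1 (n-k)).erase v, ((a:ℤ))^2)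
      = ∑ a ∈ range (n-k), ((a:ℤ)^2) - (v:ℤ)^2 := by
    have h1 : ((∑ a ∈ Ico 1 (n-k), a^2 : ℕ) : ℤ) = ∑ a ∈ range (n-k), ((a:ℤ)^2) := by
      rw [hA1]; push_cast; rfl
    have h2 := congrArg (fun z : ℕ => (z:ℤ)) hmid2
    push_cast at h1 h2
    linarith
  -- top piece in ℤ
  have hc2 : (∑ a ∈ Ico (n-k) n, (((a - 1 : ℕ)):ℤ)^2)
      = ∑ a ∈ range n, ((a:ℤ)^2) - ∑ a ∈ range (n-k), ((a:ℤ)^2)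
        - 2*(∑ a ∈ range n, (a:ℤ)) + 2*(∑ a ∈ range (n-k), (a:ℤ)) + k := by
    have e0 : ∑ a ∈ Ico (n-k) n, (((a - 1 : ℕ)):ℤ)^2
        = ∑ a ∈ Ico (n-k) n, (((a:ℤ))^2 - 2*(a:ℤ) + 1) := by
      refine Finset.sum_congr rfl (fun a ha => ?_)
      rw [Finset.mem_Ico] at ha
      rw [Nat.cast_sub (by omega : 1 ≤ a)]
      ring
    have e2 : ∑ a ∈ Ico (n-k) n, ((a:ℤ))^2
        = ∑ a ∈ range n, ((a:ℤ)^2) - ∑ a ∈ range (n-k), ((a:ℤ)^2) :=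
      Finset.sum_Ico_eq_sub _ hnkn
    have e3 : ∑ a ∈ Ico (n-k) n, ((a:ℤ))
        = ∑ a ∈ range n, (a:ℤ) - ∑ a ∈ range (n-k), (a:ℤ) :=
      Finset.sum_Ico_eq_sub _ hnkn
    have e4 : ∑ a ∈ Ico (n-k) n, (2*(a:ℤ)) = 2 * ∑ a ∈ Ico (n-k) n, ((a:ℤ)) :=
      (Finset.mul_sum _ _ _).symm
    have e5 : ∑ a ∈ Ico (n-k) n, (1:ℤ) = k := by
      rw [Finset.sum_const, Nat.card_Ico, nsmul_eq_mul]
      have : n - (n - k) = k := by omega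
      rw [this]; ring
    rw [e0, Finset.sum_add_distrib, Finset.sum_sub_distrib, e2, e4, e3, e5]
    ring
  -- target
  have htarget : mnf m + 2 * Kf m = ∑ a ∈ range n, a^2 := by
    rw [hm]
    exact (mid_identity m).symm
  rw [htarget, hsum0, hs1, hg0, hp2, hmid1, hp3]
  zify [hv1, (show k ≤ n-2 by omega), (show 2 ≤ n by omega)]
  linarith [hT, hc2, hgauss1, hgauss2]

def extR (N m : ℕ) (r' : Fin N → Fin N → Prop) : Fin (N+2) → Fin (N+2) → Prop :=
  fun i j =>
    if hi : i.val < N then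
      if hj : j.val < N then r' ⟨i.val, hi⟩ ⟨j.val, hj⟩
      else (j.val = N ∧ i.val < m) ∨ (j.val = N+1 ∧ m ≤ i.val)
    else
      if j.val < N then (i.val = N ∧ m ≤ j.val) ∨ (i.val = N+1 ∧ j.val < m)
      else i.val = N ∧ j.val = N+1

lemma extR_tournament {N m : ℕ} (r' : Fin N → Fin N → Prop) (h' : IsTournament r') :
    IsTournament (extR N m r') := by
  constructor
  · intro i
    by_cases hi : i.val < N
    · simp only [extR, dif_pos hi]
      exact h'.1 _
    · simp only [extR, dif_neg hi, if_neg hi]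
      omega
  · intro i j hij
    have hne : i.val ≠ j.val := fun h => hij (Fin.val_injective h)
    have hi2 := i.isLt
    have hj2 := j.isLt
    by_cases hi : i.val < N <;> by_cases hj : j.val < N
    · simp only [extR, dif_pos hi, dif_pos hj]
      refine h'.2 _ _ ?_
      simp only [ne_eq, Fin.mk.injEq]
      exact hne
    · simp only [extR, dif_pos hi, dif_neg hj, if_pos hi]
      omega
    · simp only [extR, dif_neg hi, dif_pos hj, if_pos hj]
      omega
    · simp only [extR, dif_neg hi, dif_neg hj, if_neg hj, if_neg hi]
      omega

lemma extR_score_mid {N m : ℕ} (r' : Fin N → Fin N → Prop)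
    (x : Fin (N+2)) (hx : x.val < N) :
    score (extR N m r') x = score r' ⟨x.val, hx⟩ + 1 := by
  classical
  rw [score_eq, Fin.sum_univ_castSucc, Fin.sum_univ_castSucc]
  have hmid : ∀ j : Fin N, (if extR N m r' x ((j.castSucc).castSucc) then (1:ℕ) else 0)
      = if r' ⟨x.val, hx⟩ j then 1 else 0 := by
    intro j
    have hjlt : ((j.castSucc).castSucc).val < N := j.isLt
    have heq : extR N m r' x ((j.castSucc).castSucc) = r' ⟨x.val, hx⟩ j := by
      simp only [extR, dif_pos hx, dif_pos hjlt]
      congr 1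
    rw [heq]
  rw [Finset.sum_congr rfl (fun j _ => hmid j), ← score_eq]
  have hv2 : ((Fin.last N).castSucc).val = N := by simp
  have hv3 : (Fin.last (N+1)).val = N+1 := by simp
  have h2 : (if extR N m r' x ((Fin.last N).castSucc) then (1:ℕ) else 0)
      + (if extR N m r' x (Fin.last (N+1)) then (1:ℕ) else 0) = 1 := by
    have e2 : extR N m r' x ((Fin.last N).castSucc)
        = ((N = N ∧ x.val < m) ∨ (N = N+1 ∧ m ≤ x.val)) := by
      simp only [extR, dif_pos hx, hv2]
      rw [dif_neg (by omega : ¬ (N < N))]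
    have e3 : extR N m r' x (Fin.last (N+1))
        = ((N+1 = N ∧ x.val < m) ∨ (N+1 = N+1 ∧ m ≤ x.val)) := by
      simp only [extR, dif_pos hx, hv3]
      rw [dif_neg (by omega : ¬ (N+1 < N))]
    rw [e2, e3]
    by_cases hxm : x.val < m
    · rw [if_pos (Or.inl ⟨rfl, hxm⟩), if_neg (by omega)]
    · rw [if_neg (by omega), if_pos (Or.inr ⟨rfl, by omega⟩)]
  omega

lemma count_ge {N c : ℕ} (hc : c ≤ N) :
    (∑ j : Fin N, if c ≤ j.val then (1:ℕ) else 0) = N - c := by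
  rw [Fin.sum_univ_eq_sum_range (fun a => if c ≤ a then (1:ℕ) else 0) N, ← Finset.card_filter]
  have : (range N).filter (fun a => c ≤ a) = Ico c N := by
    ext a
    simp only [Finset.mem_filter, Finset.mem_range, Finset.mem_Ico]
    omega
  rw [this, Nat.card_Ico]

lemma count_lt {N c : ℕ} (hc : c ≤ N) :
    (∑ j : Fin N, if j.val < c then (1:ℕ) else 0) = c := by
  rw [Fin.sum_univ_eq_sum_range (fun a => if a < c then (1:ℕ) else 0) N, ← Finset.card_filter]
  have : (range N).filter (fun a => a < c) = range c := by
    ext a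
    simp only [Finset.mem_filter, Finset.mem_range]
    omega
  rw [this, Finset.card_range]

lemma extR_score_a {N m : ℕ} (hm : N = 2*m) (r' : Fin N → Fin N → Prop)
    (x : Fin (N+2)) (hx : x.val = N) :
    score (extR N m r') x = m + 1 := by
  classical
  rw [score_eq, Fin.sum_univ_castSucc, Fin.sum_univ_castSucc]
  have hxn : ¬ x.val < N := by omega
  have hmid : ∀ j : Fin N, (if extR N m r' x ((j.castSucc).castSucc) then (1:ℕ) else 0)
      = if m ≤ j.val then 1 else 0 := by
    intro j
    have hjlt : ((j.castSucc).castSucc).val < N := j.isLt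
    have hjv : ((j.castSucc).castSucc).val = j.val := rfl
    apply if_congr _ rfl rfl
    simp only [extR]
    rw [dif_neg hxn, if_pos hjlt]
    simp only [hjv, hx]
    simp only [true_and]
    omega
  rw [Finset.sum_congr rfl (fun j _ => hmid j)]
  have hc := count_ge (show m ≤ N by omega)
  rw [hc]
  have hv2 : ((Fin.last N).castSucc).val = N := by simp
  have hv3 : (Fin.last (N+1)).val = N+1 := by simp
  have e2 : (if extR N m r' x ((Fin.last N).castSucc) then (1:ℕ) else 0) = 0 := by
    apply if_neg
    simp only [extR]
    rw [dif_neg hxn, if_neg (show ¬ ((Fin.last N).castSucc).val < N by simp)]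
    simp only [hv2]
    omega
  have e3 : (if extR N m r' x (Fin.last (N+1)) then (1:ℕ) else 0) = 1 := by
    apply if_pos
    simp only [extR]
    rw [dif_neg hxn, if_neg (show ¬ (Fin.last (N+1)).val < N by simp)]
    exact ⟨hx, by simp⟩
  rw [e2, e3]
  omega

lemma extR_score_b {N m : ℕ} (hm : N = 2*m) (r' : Fin N → Fin N → Prop)
    (x : Fin (N+2)) (hx : x.val = N+1) :
    score (extR N m r') x = m := by
  classical
  rw [score_eq, Fin.sum_univ_castSucc, Fin.sum_univ_castSucc]
  have hxn : ¬ x.val < N := by omega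
  have hmid : ∀ j : Fin N, (if extR N m r' x ((j.castSucc).castSucc) then (1:ℕ) else 0)
      = if j.val < m then 1 else 0 := by
    intro j
    have hjlt : ((j.castSucc).castSucc).val < N := j.isLt
    have hjv : ((j.castSucc).castSucc).val = j.val := rfl
    apply if_congr _ rfl rfl
    simp only [extR]
    rw [dif_neg hxn, if_pos hjlt]
    simp only [hjv, hx]
    simp only [true_and]
    omega
  rw [Finset.sum_congr rfl (fun j _ => hmid j)]
  have hc := count_lt (show m ≤ N by omega)
  rw [hc]
  have hv2 : ((Fin.last N).castSucc).val = N := by simp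
  have hv3 : (Fin.last (N+1)).val = N+1 := by simp
  have e2 : (if extR N m r' x ((Fin.last N).castSucc) then (1:ℕ) else 0) = 0 := by
    apply if_neg
    simp only [extR]
    rw [dif_neg hxn, if_neg (show ¬ ((Fin.last N).castSucc).val < N by simp)]
    rintro ⟨h1, h2⟩
    rw [hv2] at h2
    omega
  have e3 : (if extR N m r' x (Fin.last (N+1)) then (1:ℕ) else 0) = 0 := by
    apply if_neg
    simp only [extR]
    rw [dif_neg hxn, if_neg (show ¬ (Fin.last (N+1)).val < N by simp)]
    rintro ⟨h1, h2⟩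
    rw [hx] at h1
    omega
  rw [e2, e3]
  omega

lemma ext_exists {N m : ℕ} (hm : N = 2*m) (r' : Fin N → Fin N → Prop)
    (h' : IsTournament r') :
    ∃ r : Fin (N+2) → Fin (N+2) → Prop, IsTournament r ∧
      ∑ x : Fin (N+2), (score r x)^2
        = ∑ x : Fin N, (score r' x)^2 + (N*(N-1) + N + ((m+1)^2 + m^2)) := by
  refine ⟨extR N m r', extR_tournament r' h', ?_⟩
  rw [Fin.sum_univ_castSucc, Fin.sum_univ_castSucc]
  have hmid : ∀ j : Fin N, (score (extR N m r') ((j.castSucc).castSucc))^2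
      = (score r' j + 1)^2 := by
    intro j
    have hjlt : ((j.castSucc).castSucc).val < N := j.isLt
    rw [extR_score_mid r' _ hjlt]
    congr 2
  have h2 : score (extR N m r') ((Fin.last N).castSucc) = m + 1 :=
    extR_score_a hm r' _ (by simp)
  have h3 : score (extR N m r') (Fin.last (N+1)) = m :=
    extR_score_b hm r' _ (by simp)
  rw [Finset.sum_congr rfl (fun j _ => hmid j), h2, h3]
  have hexp : ∑ j : Fin N, (score r' j + 1)^2
      = ∑ j : Fin N, (score r' j)^2 + (2 * ∑ j : Fin N, score r' j + N) := by
    have hpt : ∀ j ∈ (univ : Finset (Fin N)), (score r' j + 1)^2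
        = (score r' j)^2 + (2 * score r' j + 1) := fun j _ => by ring
    rw [Finset.sum_congr rfl hpt, Finset.sum_add_distrib, Finset.sum_add_distrib,
      ← Finset.mul_sum, Finset.sum_const, card_univ, Fintype.card_fin, smul_eq_mul, mul_one]
  rw [hexp, sum_score r' h']
  ring

lemma coverage_aux (L : ℕ) (hL : 1 ≤ L) :
    ∀ j : ℕ, j + 1 ≤ L → ∀ c, c ≤ (j+1)*(2*L-2-j) →
      ∃ k v, k ≤ j ∧ 1 ≤ v ∧ v + k + 1 ≤ 2*L ∧ c = k*(2*L-2-k) + (v-1) := by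
  intro j
  induction j with
  | zero =>
      intro hj c hc
      rw [show (0+1)*(2*L-2-0) = 2*L-2 by omega] at hc
      refine ⟨0, c+1, le_refl 0, by omega, by omega, ?_⟩
      simp
  | succ i ih =>
      intro hj c hc
      by_cases hcase : c ≤ (i+1)*(2*L-2-i)
      · obtain ⟨k, v, hk, h1, h2, h3⟩ := ih (by omega) c hcase
        exact ⟨k, v, by omega, h1, h2, h3⟩
      · push_neg at hcase
        obtain ⟨P, hP⟩ : ∃ P, P = (i+1)*(2*L-3-i) := ⟨_, rfl⟩
        have hPle : P ≤ (i+1)*(2*L-2-i) := by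
          rw [hP]; exact Nat.mul_le_mul_left _ (by omega)
        have hPc : P < c := lt_of_le_of_lt hPle hcase
        have hub : c ≤ P + (2*L-3-i) := by
          have h0 : (i+1+1)*(2*L-2-(i+1)) = (i+2)*(2*L-3-i) := by
            congr 1
            omega
          have hsucc : (i+2)*(2*L-3-i) = P + (2*L-3-i) := by
            rw [hP, Nat.succ_mul]
          rw [h0, hsucc] at hc
          exact hc
        refine ⟨i+1, c - P + 1, le_refl _, by omega, by omega, ?_⟩
        have hPP : (i+1)*(2*L-2-(i+1)) = P := by rw [hP]; congr 1; omega
        rw [hPP]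
        omega

lemma coverage (L : ℕ) (hL : 1 ≤ L) (c : ℕ) (hc : c ≤ L*(L-1)) :
    ∃ k v, k + 1 ≤ L ∧ 1 ≤ v ∧ v + k + 1 ≤ 2*L ∧ c = k*(2*L-2-k) + (v-1) := by
  have hbound : c ≤ (L-1+1)*(2*L-2-(L-1)) := by
    have h1 : (L-1+1)*(2*L-2-(L-1)) = L*(L-1) := by
      congr 1 <;> omega
    rw [h1]
    exact hc
  obtain ⟨k, v, hk, h1, h2, h3⟩ := coverage_aux L hL (L-1) (by omega) c hbound
  exact ⟨k, v, by omega, h1, h2, h3⟩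

lemma mnf_step (m : ℕ) :
    mnf (m+1) = mnf m + (2*m*(2*m-1) + 2*m + ((m+1)^2 + m^2)) := by
  cases m with
  | zero => simp [mnf]
  | succ w =>
      have h1 : mnf (w+1+1) = (w+2)*(2*(w+2)*(w+1)+1) := by simp [mnf]
      have h2 : mnf (w+1) = (w+1)*(2*(w+1)*w+1) := by simp [mnf]
      have h3 : 2*(w+1)-1 = 2*w+1 := by omega
      rw [h1, h2, h3]
      ring

lemma main_exists : ∀ m : ℕ, ∀ n, n = 2*m → ∀ t, t ≤ Kf m →
    ∃ r : Fin n → Fin n → Prop, IsTournament r ∧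
      ∑ x : Fin n, (score r x)^2 = mnf m + 2*t := by
  intro m
  induction m with
  | zero =>
      intro n hn t ht
      have ht0 : t = 0 := by simpa [Kf] using ht
      subst hn
      subst ht0
      refine ⟨fun _ _ => False, ⟨fun i => i.elim0, fun i => i.elim0⟩, ?_⟩
      simp [mnf]
  | succ m ih =>
      intro n hn t ht
      by_cases hcase : t ≤ Kf m
      · obtain ⟨r', h', hsum⟩ := ih (2*m) rfl t hcase
        have hn' : n = (2*m) + 2 := by omega
        subst hn'
        obtain ⟨r, hr, hs⟩ := ext_exists rfl r' h'
        refine ⟨r, hr, ?_⟩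
        rw [hs, hsum, mnf_step m]
        ring
      · push_neg at hcase
        have hKstep : Kf (m+1) = Kf m + (m^2+m) := Kf_succ m
        have hcle : Kf (m+1) - t ≤ (m+1)*((m+1)-1) := by
          have h1 : (m+1)*((m+1)-1) = m^2+m := by
            have : (m+1)-1 = m := by omega
            rw [this]; ring
          omega
        obtain ⟨k, v, hk, hv1, hv2, hceq⟩ :=
          coverage (m+1) (by omega) (Kf (m+1) - t) hcle
        obtain ⟨r, hr, hsum⟩ := tour_exists hn (by omega) hk hv1 (by omega)
        refine ⟨r, hr, ?_⟩
        have hnk : k*(n-2-k) + (v-1) = Kf (m+1) - t := by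
          rw [hceq]
          congr 2
          omega
        rw [hnk] at hsum
        omega

theorem stmt12 {n : ℕ} (hn : Even n) :
    Set.ncard {v : ℕ | ∃ r : Fin n → Fin n → Prop,
        IsTournament r ∧ ∑ i : Fin n, (score r i) ^ 2 = v}
      = 2 * (n / 2 + 1).choose 3 + 1 := by
  classical
  obtain ⟨m, hm⟩ : ∃ m, n = 2*m := by
    obtain ⟨a, ha⟩ := hn
    exact ⟨a, by omega⟩
  have hset : {v : ℕ | ∃ r : Fin n → Fin n → Prop,
      IsTournament r ∧ ∑ i : Fin n, (score r i) ^ 2 = v}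
      = (fun t => mnf m + 2*t) '' (Set.Iic (Kf m)) := by
    ext w
    simp only [Set.mem_setOf_eq, Set.mem_image, Set.mem_Iic]
    constructor
    · rintro ⟨r, hr, hsum⟩
      obtain ⟨hlow, hpar⟩ := lower_parity hm r hr
      have hup := upper_bound hm r hr
      rw [hsum] at hlow hpar hup
      exact ⟨(w - mnf m)/2, by omega, by omega⟩
    · rintro ⟨t, ht, hw⟩
      obtain ⟨r, hr, hsum⟩ := main_exists m n hm t ht
      exact ⟨r, hr, by rw [hsum, hw]⟩
  rw [hset]
  have hinj : Function.Injective (fun t => mnf m + 2*t) := fun a b hab => by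
    simp only at hab
    omega
  rw [Set.ncard_image_of_injective _ hinj]
  have hIic : (Set.Iic (Kf m)) = ↑(Finset.Iic (Kf m)) := by
    ext a
    simp
  rw [hIic, Set.ncard_coe_finset, Nat.card_Iic]
  have hn2 : n / 2 = m := by omega
  rw [hn2, Kf_eq_choose]
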